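/- Let (Ω, 𝒫) and (Ω', 𝒫') be probability spaces carrying binary random variables (Y, Z, G) and (Y', Z', G') respectively, each satisfying the hypotheses of Theorem 1 (conditional independence of the prediction and subpopulation indicator given the label, and strictly positive marginals for labels and subpopulations). Suppose the two settings have equal label marginals 𝒫(Y=1) = 𝒫'(Y'=1), equal subpopulation marginals 𝒫(Z=1) = 𝒫'(Z'=1), equal true positive rates 𝒫(G=1 | Y=1) = 𝒫'(G'=1 | Y'=1), and equal true negative rates 𝒫(G=0 | Y=0) = 𝒫'(G'=0 | Y'=0). If the levels of spurious correlation satisfy |𝒫(Z=1|Y=1) − 𝒫(Z=1|Y=0)| ≤ |𝒫'(Z'=1|Y'=1) − 𝒫'(Z'=1|Y'=0)|, then the subpopulation accuracy gaps satisfy |𝒫(Y=G|Z=1) − 𝒫(Y=G|Z=0)| ≤ |𝒫'(Y'=G'|Z'=1) − 𝒫'(Y'=G'|Z'=0)|. -/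

import Mathlib

open MeasureTheory

/-- Conditional probability `𝒫(A | B)` as a real number. -/
noncomputable def condProb {Ω : Type*} [MeasurableSpace Ω] (μ : Measure Ω)
    (A B : Set Ω) : ℝ :=
  (μ (A ∩ B)).toReal / (μ B).toReal

section helpers
variable {Ω : Type*} [MeasurableSpace Ω] (μ : Measure Ω) [IsProbabilityMeasure μ]

lemma msb {f : Ω → Bool} (hf : Measurable f) (b : Bool) :
    MeasurableSet {ω | f ω = b} := hf (measurableSet_singleton b)

omit [IsProbabilityMeasure μ] in
lemma false_compl (f : Ω → Bool) : {ω | f ω = false} = {ω | f ω = true}ᶜ := by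
  ext ω; simp

lemma split_real (S : Set Ω) {f : Ω → Bool} (hf : Measurable f) :
    (μ S).toReal =
      (μ (S ∩ {ω | f ω = true})).toReal + (μ (S ∩ {ω | f ω = false})).toReal := by
  have h : μ (S ∩ {ω | f ω = true}) + μ (S \ {ω | f ω = true}) = μ S :=
    measure_inter_add_diff S (msb hf true)
  have h2 : S \ {ω | f ω = true} = S ∩ {ω | f ω = false} := by
    rw [false_compl]; rfl
  rw [h2] at h
  rw [← h, ENNReal.toReal_add (measure_ne_top μ _) (measure_ne_top μ _)]

/-- Gap formula for one setting. -/
lemma gap_formula (Y Z G : Ω → Bool)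
    (hY : Measurable Y) (hZ : Measurable Z) (hG : Measurable G)
    (hCI : ∀ g z y : Bool,
      condProb μ ({ω | G ω = g} ∩ {ω | Z ω = z}) {ω | Y ω = y} =
        condProb μ {ω | G ω = g} {ω | Y ω = y} *
          condProb μ {ω | Z ω = z} {ω | Y ω = y})
    (hY1 : 0 < μ {ω | Y ω = true}) (hY0 : 0 < μ {ω | Y ω = false})
    (hZ1 : 0 < μ {ω | Z ω = true}) (hZ0 : 0 < μ {ω | Z ω = false}) :
    condProb μ {ω | Y ω = G ω} {ω | Z ω = true} -
        condProb μ {ω | Y ω = G ω} {ω | Z ω = false} =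
      (condProb μ {ω | Z ω = true} {ω | Y ω = true} -
          condProb μ {ω | Z ω = true} {ω | Y ω = false}) *
        ((μ {ω | Y ω = true}).toReal * (1 - (μ {ω | Y ω = true}).toReal) *
          (condProb μ {ω | G ω = true} {ω | Y ω = true} -
            condProb μ {ω | G ω = false} {ω | Y ω = false}) /
          ((μ {ω | Z ω = true}).toReal * (1 - (μ {ω | Z ω = true}).toReal))) := by
  have hp0 : 0 < (μ {ω | Y ω = true}).toReal :=
    ENNReal.toReal_pos hY1.ne' (measure_ne_top μ _)
  have hq0 : 0 < (μ {ω | Z ω = true}).toReal :=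
    ENNReal.toReal_pos hZ1.ne' (measure_ne_top μ _)
  have hp0' : 0 < (μ {ω | Y ω = false}).toReal :=
    ENNReal.toReal_pos hY0.ne' (measure_ne_top μ _)
  have hq0' : 0 < (μ {ω | Z ω = false}).toReal :=
    ENNReal.toReal_pos hZ0.ne' (measure_ne_top μ _)
  have hYsum : (μ {ω | Y ω = true}).toReal + (μ {ω | Y ω = false}).toReal = 1 := by
    have := split_real μ Set.univ hY
    simp only [Set.univ_inter, measure_univ, ENNReal.toReal_one] at this
    linarith
  have hZsum : (μ {ω | Z ω = true}).toReal + (μ {ω | Z ω = false}).toReal = 1 := by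
    have := split_real μ Set.univ hZ
    simp only [Set.univ_inter, measure_univ, ENNReal.toReal_one] at this
    linarith
  have hp' : (μ {ω | Y ω = false}).toReal = 1 - (μ {ω | Y ω = true}).toReal := by
    linarith
  have hq' : (μ {ω | Z ω = false}).toReal = 1 - (μ {ω | Z ω = true}).toReal := by
    linarith
  have hPy : ∀ y : Bool, (μ {ω | Y ω = y}).toReal ≠ 0 := by
    intro y; cases y
    · exact ne_of_gt hp0'
    · exact ne_of_gt hp0
  -- joint probabilities from conditional independence
  have joint : ∀ g z y : Bool,
      (μ (({ω | G ω = g} ∩ {ω | Z ω = z}) ∩ {ω | Y ω = y})).toReal =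
        condProb μ {ω | G ω = g} {ω | Y ω = y} *
          condProb μ {ω | Z ω = z} {ω | Y ω = y} * (μ {ω | Y ω = y}).toReal := by
    intro g z y
    have h := hCI g z y
    unfold condProb at h ⊢
    rw [div_eq_iff (hPy y)] at h
    rw [h]
  -- complement of conditional probability of Z given Y
  have hZcompl : ∀ y : Bool,
      condProb μ {ω | Z ω = false} {ω | Y ω = y} =
        1 - condProb μ {ω | Z ω = true} {ω | Y ω = y} := by
    intro y
    have h := split_real μ {ω | Y ω = y} hZ
    unfold condProb
    rw [Set.inter_comm {ω | Z ω = false}, Set.inter_comm {ω | Z ω = true},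
      eq_sub_iff_add_eq, ← add_div, div_eq_one_iff_eq (hPy y)]
    linarith
  -- marginal of Z in terms of conditional probabilities
  have hqsplit : (μ {ω | Z ω = true}).toReal =
      condProb μ {ω | Z ω = true} {ω | Y ω = true} * (μ {ω | Y ω = true}).toReal +
        condProb μ {ω | Z ω = true} {ω | Y ω = false} *
          (μ {ω | Y ω = false}).toReal := by
    unfold condProb
    rw [div_mul_cancel₀ _ (hPy true), div_mul_cancel₀ _ (hPy false)]
    exact split_real μ {ω | Z ω = true} hY
  -- decomposition of the accuracy sets
  have haccm : ∀ z : Bool,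
      (μ ({ω | Y ω = G ω} ∩ {ω | Z ω = z})).toReal =
        (μ (({ω | G ω = true} ∩ {ω | Z ω = z}) ∩ {ω | Y ω = true})).toReal +
          (μ (({ω | G ω = false} ∩ {ω | Z ω = z}) ∩ {ω | Y ω = false})).toReal := by
    intro z
    have hset : {ω | Y ω = G ω} ∩ {ω | Z ω = z} =
        (({ω | G ω = true} ∩ {ω | Z ω = z}) ∩ {ω | Y ω = true}) ∪
          (({ω | G ω = false} ∩ {ω | Z ω = z}) ∩ {ω | Y ω = false}) := by
      ext ω
      simp only [Set.mem_inter_iff, Set.mem_union, Set.mem_setOf_eq]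
      cases hy : Y ω <;> cases hg : G ω <;> simp
    rw [hset,
      measure_union ?_ (((msb hG false).inter (msb hZ z)).inter (msb hY false))]
    · exact ENNReal.toReal_add (measure_ne_top μ _) (measure_ne_top μ _)
    · apply Set.disjoint_left.mpr
      rintro ω ⟨-, h1⟩ ⟨-, h2⟩
      simp only [Set.mem_setOf_eq] at h1 h2
      rw [h1] at h2
      simp at h2
  -- numerators
  have hnum1 : (μ ({ω | Y ω = G ω} ∩ {ω | Z ω = true})).toReal =
      condProb μ {ω | G ω = true} {ω | Y ω = true} *
          condProb μ {ω | Z ω = true} {ω | Y ω = true} *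
          (μ {ω | Y ω = true}).toReal +
        condProb μ {ω | G ω = false} {ω | Y ω = false} *
          condProb μ {ω | Z ω = true} {ω | Y ω = false} *
          (μ {ω | Y ω = false}).toReal := by
    rw [haccm true, joint true true true, joint false true false]
  have hnum0 : (μ ({ω | Y ω = G ω} ∩ {ω | Z ω = false})).toReal =
      condProb μ {ω | G ω = true} {ω | Y ω = true} *
          (1 - condProb μ {ω | Z ω = true} {ω | Y ω = true}) *
          (μ {ω | Y ω = true}).toReal +
        condProb μ {ω | G ω = false} {ω | Y ω = false} *
          (1 - condProb μ {ω | Z ω = true} {ω | Y ω = false}) *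
          (μ {ω | Y ω = false}).toReal := by
    rw [haccm false, joint true false true, joint false false false,
      hZcompl true, hZcompl false]
  -- final computation
  have hq1 : (μ {ω | Z ω = true}).toReal < 1 := by linarith
  conv_lhs => rw [show condProb μ {ω | Y ω = G ω} {ω | Z ω = true} -
      condProb μ {ω | Y ω = G ω} {ω | Z ω = false} =
      (μ ({ω | Y ω = G ω} ∩ {ω | Z ω = true})).toReal /
          (μ {ω | Z ω = true}).toReal -
        (μ ({ω | Y ω = G ω} ∩ {ω | Z ω = false})).toReal /
          (μ {ω | Z ω = false}).toReal from rfl]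
  rw [hnum1, hnum0, hq', hqsplit, hp']
  set A := condProb μ {ω | G ω = true} {ω | Y ω = true}
  set B := condProb μ {ω | G ω = false} {ω | Y ω = false}
  set P1 := condProb μ {ω | Z ω = true} {ω | Y ω = true}
  set P0 := condProb μ {ω | Z ω = true} {ω | Y ω = false}
  set p := (μ {ω | Y ω = true}).toReal
  have hd1 : P1 * p + P0 * (1 - p) ≠ 0 := by
    rw [← hp', ← hqsplit]; exact ne_of_gt hq0
  have hd2 : 1 - (P1 * p + P0 * (1 - p)) ≠ 0 := by
    rw [← hp', ← hqsplit]; exact ne_of_gt (by linarith)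
  field_simp
  ring
end helpers

/-- **Monotonicity of the accuracy gap in the level of spurious correlation.**
Two settings satisfying the hypotheses of Theorem 1, with equal label
marginals, equal subpopulation marginals, equal true positive rates and equal
true negative rates: if the first setting has a smaller (or equal) level of
spurious correlation `|π₁ − π₀|`, then its subpopulation accuracy gap is
smaller (or equal) as well. -/
theorem accuracy_gap_monotone {Ω : Type*} [MeasurableSpace Ω]
    (μ : Measure Ω) [IsProbabilityMeasure μ] (Y Z G : Ω → Bool)
    {Ω' : Type*} [MeasurableSpace Ω']
    (μ' : Measure Ω') [IsProbabilityMeasure μ'] (Y' Z' G' : Ω' → Bool)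
    (hY : Measurable Y) (hZ : Measurable Z) (hG : Measurable G)
    (hY' : Measurable Y') (hZ' : Measurable Z') (hG' : Measurable G')
    (hCI : ∀ g z y : Bool,
      condProb μ ({ω | G ω = g} ∩ {ω | Z ω = z}) {ω | Y ω = y} =
        condProb μ {ω | G ω = g} {ω | Y ω = y} *
          condProb μ {ω | Z ω = z} {ω | Y ω = y})
    (hCI' : ∀ g z y : Bool,
      condProb μ' ({ω | G' ω = g} ∩ {ω | Z' ω = z}) {ω | Y' ω = y} =
        condProb μ' {ω | G' ω = g} {ω | Y' ω = y} *
          condProb μ' {ω | Z' ω = z} {ω | Y' ω = y})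
    (hY1 : 0 < μ {ω | Y ω = true}) (hY0 : 0 < μ {ω | Y ω = false})
    (hZ1 : 0 < μ {ω | Z ω = true}) (hZ0 : 0 < μ {ω | Z ω = false})
    (hY1' : 0 < μ' {ω | Y' ω = true}) (hY0' : 0 < μ' {ω | Y' ω = false})
    (hZ1' : 0 < μ' {ω | Z' ω = true}) (hZ0' : 0 < μ' {ω | Z' ω = false})
    (hYeq : μ {ω | Y ω = true} = μ' {ω | Y' ω = true})
    (hZeq : μ {ω | Z ω = true} = μ' {ω | Z' ω = true})
    (hTPR : condProb μ {ω | G ω = true} {ω | Y ω = true} =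
      condProb μ' {ω | G' ω = true} {ω | Y' ω = true})
    (hTNR : condProb μ {ω | G ω = false} {ω | Y ω = false} =
      condProb μ' {ω | G' ω = false} {ω | Y' ω = false})
    (hspu : |condProb μ {ω | Z ω = true} {ω | Y ω = true} -
        condProb μ {ω | Z ω = true} {ω | Y ω = false}| ≤
      |condProb μ' {ω | Z' ω = true} {ω | Y' ω = true} -
          condProb μ' {ω | Z' ω = true} {ω | Y' ω = false}|) :
    |condProb μ {ω | Y ω = G ω} {ω | Z ω = true} -
        condProb μ {ω | Y ω = G ω} {ω | Z ω = false}| ≤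
      |condProb μ' {ω | Y' ω = G' ω} {ω | Z' ω = true} -
          condProb μ' {ω | Y' ω = G' ω} {ω | Z' ω = false}| := by
  rw [gap_formula μ Y Z G hY hZ hG hCI hY1 hY0 hZ1 hZ0,
    gap_formula μ' Y' Z' G' hY' hZ' hG' hCI' hY1' hY0' hZ1' hZ0',
    hYeq, hZeq, hTPR, hTNR, abs_mul, abs_mul]
  exact mul_le_mul_of_nonneg_right hspu (abs_nonneg _)
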